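/- arXiv:2209.08673 — 2 statements merged into one kernel-verified Lean document; each statement's English description precedes it below -/
import Mathlib

section
/- For an injective hash function, Merkle verification is sound: if a proof π verifies leaf value v at index i against the root of the Merkle tree built from list D, then v = D[i]. -/
variable {α β : Type*}

/-- Root of a complete binary Merkle tree of depth `d` over leaves `D`. -/
def mroot (Hl : α → β) (Hp : β → β → β) : (d : ℕ) → (Fin (2 ^ d) → α) → β
  | 0, D => Hl (D ⟨0, by norm_num⟩)
  | d + 1, D =>
      Hp (mroot Hl Hp d (fun i => D ⟨i.val, by have := i.isLt; simp [pow_succ]; omega⟩))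
         (mroot Hl Hp d (fun i => D ⟨2 ^ d + i.val, by have := i.isLt; simp [pow_succ]; omega⟩))

/-- Merkle verification fold: `mfold Hl Hp v π i t` is `h_{t+1}` in the paper's notation. -/
def mfold (Hl : α → β) (Hp : β → β → β) (v : α) (π : ℕ → β) (i : ℕ) : ℕ → β
  | 0 => Hl v
  | t + 1 =>
      if Nat.testBit i t then Hp (π t) (mfold Hl Hp v π i t)
      else Hp (mfold Hl Hp v π i t) (π t)

/-- Root of the depth-`k` subtree whose leaves are `D[j·2^k], …, D[(j+1)·2^k − 1]`. -/
def subRoot (Hl : α → β) (Hp : β → β → β) (d k : ℕ) (hk : k ≤ d)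
    (D : Fin (2 ^ d) → α) (j : Fin (2 ^ (d - k))) : β :=
  mroot Hl Hp k (fun i => D ⟨j.val * 2 ^ k + i.val, by
    have h1 := j.isLt; have h2 := i.isLt
    calc j.val * 2 ^ k + i.val < (j.val + 1) * 2 ^ k := by nlinarith
    _ ≤ 2 ^ (d - k) * 2 ^ k := by exact Nat.mul_le_mul_right _ (by omega)
    _ = 2 ^ d := by rw [← pow_add]; congr 1; omega⟩)

lemma mroot_congr (Hl : α → β) (Hp : β → β → β) (k : ℕ) (f g : Fin (2 ^ k) → α)
    (h : ∀ i, f i = g i) : mroot Hl Hp k f = mroot Hl Hp k g := by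
  rw [funext h]

lemma subRoot_succ (Hl : α → β) (Hp : β → β → β) (d k : ℕ) (hk : k + 1 ≤ d)
    (D : Fin (2 ^ d) → α) (j : Fin (2 ^ (d - (k+1)))) :
    subRoot Hl Hp d (k+1) hk D j =
      Hp (subRoot Hl Hp d k (by omega) D ⟨2 * j.val, by
            have := j.isLt
            have : 2 ^ (d - (k+1)) * 2 = 2 ^ (d - k) := by
              rw [← pow_succ]; congr 1; omega
            omega⟩)
         (subRoot Hl Hp d k (by omega) D ⟨2 * j.val + 1, by
            have := j.isLt
            have : 2 ^ (d - (k+1)) * 2 = 2 ^ (d - k) := by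
              rw [← pow_succ]; congr 1; omega
            omega⟩) := by
  simp only [subRoot, mroot]
  congr 1
  · apply mroot_congr; intro i; congr 1; apply Fin.ext; simp; ring
  · apply mroot_congr; intro i; congr 1; apply Fin.ext; simp [pow_succ]; ring

lemma sound_aux (Hl : α → β) (Hp : β → β → β)
    (hHl : Function.Injective Hl)
    (hHp : Function.Injective fun p : β × β => Hp p.1 p.2)
    (d : ℕ) (D : Fin (2 ^ d) → α) (v : α) (π : ℕ → β) (i : Fin (2 ^ d)) :
    ∀ k (hk : k ≤ d)
      (hlt : i.val / 2 ^ k < 2 ^ (d - k)),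
      mfold Hl Hp v π i.val k = subRoot Hl Hp d k hk D ⟨i.val / 2 ^ k, hlt⟩ →
      v = D i := by
  have hHp' : ∀ a b c e : β, Hp a b = Hp c e → a = c ∧ b = e := by
    intro a b c e hh
    have := hHp (show (fun p : β × β => Hp p.1 p.2) (a, b) =
      (fun p : β × β => Hp p.1 p.2) (c, e) from hh)
    exact ⟨congrArg Prod.fst this, congrArg Prod.snd this⟩
  intro k
  induction k with
  | zero =>
    intro hk hlt h
    simp only [mfold, subRoot, mroot] at h
    have := hHl h
    rw [this]; congr 1; apply Fin.ext; simp
  | succ k ih =>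
    intro hk hlt h
    have hdiv : i.val / 2 ^ k / 2 = i.val / 2 ^ (k+1) := by
      rw [Nat.div_div_eq_div_mul, ← pow_succ]
    have hlt' : i.val / 2 ^ k < 2 ^ (d - k) := by
      have := i.isLt
      have h2 : 2 ^ k * 2 ^ (d - k) = 2 ^ d := by rw [← pow_add]; congr 1; omega
      exact Nat.div_lt_of_lt_mul (by omega)
    rw [subRoot_succ] at h
    have hbit : Nat.testBit i.val k = decide (i.val / 2 ^ k % 2 = 1) :=
      Nat.testBit_eq_decide_div_mod_eq ..
    simp only [mfold] at h
    by_cases hb : Nat.testBit i.val k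
    · rw [if_pos hb] at h
      obtain ⟨-, h2⟩ := hHp' _ _ _ _ h
      apply ih (by omega) hlt'
      rw [h2]
      congr 1
      apply Fin.ext
      rw [hbit] at hb
      simp at hb ⊢
      omega
    · rw [if_neg hb] at h
      obtain ⟨h2, -⟩ := hHp' _ _ _ _ h
      apply ih (by omega) hlt'
      rw [h2]
      congr 1
      apply Fin.ext
      rw [hbit] at hb
      simp at hb ⊢
      omega

/-- **Soundness of Merkle verification.** For injective hash functions, if a proof `π`
verifies leaf value `v` at index `i` against the root of the Merkle tree built from
`D`, then `v = D[i]`. -/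
theorem merkle_verification_sound (Hl : α → β) (Hp : β → β → β)
    (hHl : Function.Injective Hl)
    (hHp : Function.Injective fun p : β × β => Hp p.1 p.2)
    (d : ℕ) (D : Fin (2 ^ d) → α) (v : α) (π : ℕ → β) (i : Fin (2 ^ d))
    (hver : mfold Hl Hp v π i.val d = mroot Hl Hp d D) :
    v = D i := by
  apply sound_aux Hl Hp hHl hHp d D v π i d le_rfl
    (by have h0 : i.val / 2 ^ d = 0 := Nat.div_eq_of_lt i.isLt; simp [h0])
  rw [hver]
  simp only [subRoot]
  apply mroot_congr
  intro j
  congr 1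
  apply Fin.ext
  have h0 : i.val / 2 ^ d = 0 := Nat.div_eq_of_lt i.isLt
  simp [h0]
end

section
/- If two complete binary hash trees of the same depth have equal roots under an injective hash, then a Merkle proof verifying a value v at index i against one root also verifies v at i against the other root, and soundness transfers: v must equal the leaf at index i of either tree. -/
variable {α β : Type*}

theorem Hp_inj {Hp : β → β → β}
    (hHp : Function.Injective fun p : β × β => Hp p.1 p.2)
    {a b c e : β} (h : Hp a b = Hp c e) : a = c ∧ b = e := by
  have h' : (fun p : β × β => Hp p.1 p.2) (a, b) = (fun p : β × β => Hp p.1 p.2) (c, e) := h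
  have := hHp h'
  exact ⟨congrArg Prod.fst this, congrArg Prod.snd this⟩

theorem mroot_inj (Hl : α → β) (Hp : β → β → β)
    (hHl : Function.Injective Hl)
    (hHp : Function.Injective fun p : β × β => Hp p.1 p.2) :
    ∀ (d : ℕ) (D D' : Fin (2 ^ d) → α),
      mroot Hl Hp d D = mroot Hl Hp d D' → ∀ i, D i = D' i := by
  intro d
  induction d with
  | zero =>
      intro D D' h i
      have h0 : D ⟨0, by norm_num⟩ = D' ⟨0, by norm_num⟩ := hHl h
      have : i = ⟨0, by norm_num⟩ := by omega
      rw [this]; exact h0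
  | succ d ih =>
      intro D D' h i
      simp only [mroot] at h
      obtain ⟨h1, h2⟩ := Hp_inj hHp h
      by_cases hi : i.val < 2 ^ d
      · have := ih _ _ h1 ⟨i.val, hi⟩
        simpa using this
      · have hi2 : i.val - 2 ^ d < 2 ^ d := by
          have := i.isLt; simp [pow_succ] at this; omega
        have := ih _ _ h2 ⟨i.val - 2 ^ d, hi2⟩
        simp only at this
        have heq : (⟨2 ^ d + (i.val - 2 ^ d), by
            have := i.isLt; simp [pow_succ] at this ⊢; omega⟩ : Fin (2 ^ (d+1))) = i := by
          apply Fin.ext; simp; omega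
        rwa [heq] at this

theorem mfold_sound (Hl : α → β) (Hp : β → β → β)
    (hHl : Function.Injective Hl)
    (hHp : Function.Injective fun p : β × β => Hp p.1 p.2)
    (v : α) (π : ℕ → β) :
    ∀ (d : ℕ) (i : ℕ) (D : Fin (2 ^ d) → α),
      mfold Hl Hp v π i d = mroot Hl Hp d D →
      v = D ⟨i % 2 ^ d, Nat.mod_lt _ (Nat.pow_pos (by norm_num))⟩ := by
  intro d
  induction d with
  | zero =>
      intro i D h
      simp only [mfold, mroot] at h
      have := hHl h
      simpa [Nat.mod_one] using this
  | succ d ih =>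
      intro i D h
      simp only [mfold, mroot] at h
      have hmod : i % 2 ^ (d + 1) = i % 2 ^ d + 2 ^ d * (i / 2 ^ d % 2) := by
        rw [pow_succ, Nat.mod_mul]
      have hbit : Nat.testBit i d = decide (i / 2 ^ d % 2 = 1) :=
        Nat.testBit_eq_decide_div_mod_eq
      by_cases hb : Nat.testBit i d
      · rw [if_pos hb] at h
        obtain ⟨-, h2⟩ := Hp_inj hHp h
        have := ih i _ h2
        rw [this]
        have hd : i / 2 ^ d % 2 = 1 := by
          rw [hbit] at hb; simpa using hb
        congr 1
        apply Fin.ext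
        simp [hmod, hd]; omega
      · rw [if_neg hb] at h
        obtain ⟨h1, -⟩ := Hp_inj hHp h
        have := ih i _ h1
        rw [this]
        have hd : i / 2 ^ d % 2 = 0 := by
          rw [hbit] at hb; simp at hb; omega
        congr 1
        apply Fin.ext
        simp [hmod, hd]

/-- **Soundness transfers across equal roots.** If two complete binary hash trees of
the same depth have equal roots under injective hashes, then a Merkle proof verifying
value `v` at index `i` against one root also verifies `v` at `i` against the other
root, and `v` equals the leaf at index `i` of either tree. -/
theorem merkle_equal_roots_transfer (Hl : α → β) (Hp : β → β → β)
    (hHl : Function.Injective Hl)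
    (hHp : Function.Injective fun p : β × β => Hp p.1 p.2)
    (d : ℕ) (D D' : Fin (2 ^ d) → α)
    (hroot : mroot Hl Hp d D = mroot Hl Hp d D')
    (v : α) (π : ℕ → β) (i : Fin (2 ^ d))
    (hver : mfold Hl Hp v π i.val d = mroot Hl Hp d D) :
    mfold Hl Hp v π i.val d = mroot Hl Hp d D' ∧ v = D i ∧ v = D' i := by
  have hDD' := mroot_inj Hl Hp hHl hHp d D D' hroot
  have hv := mfold_sound Hl Hp hHl hHp v π d i.val D hver
  have hi : i.val % 2 ^ d = i.val := Nat.mod_eq_of_lt i.isLt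
  refine ⟨hroot ▸ hver, ?_, ?_⟩
  · rw [hv]; congr 1; exact Fin.ext hi
  · rw [hv, hDD']; congr 1; exact Fin.ext hi
end
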